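/- Let κ be an uncountable cardinal and let {P_α : α < κ} be a family of directed sets. Then the full product ∏_{α<κ} P_α, with the coordinatewise partial order, has calibre (ω₁,ω) if and only if (1) for every countable subset A of κ the subproduct ∏_{α∈A} P_α has calibre (ω₁,ω), and (2) the set {α < κ : P_α is not countably directed} is countable. -/
import Mathlib


open Cardinal Set

/-- A directed set has calibre `(ω₁,ω)` if every uncountable subset contains an
infinite subset which is bounded (has an upper bound). -/
def CalibreO1O (P : Type*) [Preorder P] : Prop :=
  ∀ S : Set P, ¬ S.Countable → ∃ T ⊆ S, T.Infinite ∧ BddAbove T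

/-- A directed set is countably directed if every countable subset is bounded. -/
def CountablyDirected (P : Type*) [Preorder P] : Prop :=
  ∀ S : Set P, S.Countable → BddAbove S

/-- In a directed partial order which is not countably directed, there is a strictly
increasing sequence such that only finitely many of its terms lie below any given element. -/
lemma exists_ladder {Q : Type*} [PartialOrder Q]
    (hdir : ∀ F : Set Q, F.Finite → BddAbove F)
    (hncd : ¬ CountablyDirected Q) :
    ∃ t : ℕ → Q, StrictMono t ∧ ∀ u : Q, {n | t n ≤ u}.Finite := by
  classical
  simp only [CountablyDirected, not_forall] at hncd
  obtain ⟨D, hDc, hDu⟩ := hncd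
  have hne : D.Nonempty := by
    rcases D.eq_empty_or_nonempty with h | h
    · exact absurd (h ▸ hdir ∅ Set.finite_empty) hDu
    · exact h
  obtain ⟨d, hd⟩ := hDc.exists_eq_range hne
  have hwit : ∀ q : Q, ∃ k, ¬ d k ≤ q := by
    intro q
    by_contra h
    push_neg at h
    exact hDu ⟨q, by rw [hd]; rintro x ⟨k, rfl⟩; exact h k⟩
  set wit : Q → Q := fun q => d (hwit q).choose with hwitdef
  have hwitp : ∀ q, ¬ wit q ≤ q := fun q => (hwit q).choose_spec
  have hstep : ∀ q : Q, ∀ n : ℕ, ∃ s : Q, q ≤ s ∧ wit q ≤ s ∧ ∀ k ≤ n, d k ≤ s := by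
    intro q n
    obtain ⟨s, hs⟩ := hdir ({q, wit q} ∪ d '' Set.Iic n)
      (((Set.finite_singleton (wit q)).insert q).union ((Set.finite_Iic n).image d))
    refine ⟨s, hs (Set.mem_union_left _ (Set.mem_insert _ _)),
      hs (Set.mem_union_left _ (Set.mem_insert_of_mem _ rfl)),
      fun k hk => hs (Set.mem_union_right _ ⟨k, Set.mem_Iic.mpr hk, rfl⟩)⟩
  choose step hstep1 hstep2 hstep3 using hstep
  set t : ℕ → Q := fun n => Nat.rec (motive := fun _ => Q) (d 0) (fun n q => step q n) n with htdef
  have hts : ∀ n, t (n + 1) = step (t n) n := fun n => rfl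
  have hmono : StrictMono t := by
    apply strictMono_nat_of_lt_succ
    intro n
    refine lt_of_le_of_ne (by rw [hts]; exact hstep1 (t n) n) ?_
    intro heq
    have h2 : wit (t n) ≤ t (n + 1) := by rw [hts]; exact hstep2 (t n) n
    exact hwitp (t n) (h2.trans_eq heq.symm)
  refine ⟨t, hmono, ?_⟩
  intro u
  by_contra hinf
  apply hDu
  refine ⟨u, ?_⟩
  rw [hd]
  rintro _ ⟨k, rfl⟩
  have hnsub : ¬ {n | t n ≤ u} ⊆ Set.Iic k := fun hsub => hinf ((Set.finite_Iic k).subset hsub)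
  obtain ⟨m, hm, hmk⟩ := Set.not_subset.mp hnsub
  have hkm : k + 1 ≤ m := Nat.succ_le_of_lt (not_le.mp hmk)
  have h1 : d k ≤ t (k + 1) := by rw [hts]; exact hstep3 (t k) k k le_rfl
  exact h1.trans ((hmono.monotone hkm).trans hm)

/-- Calibre `(ω₁,ω)` of a full product passes to any subproduct. -/
lemma calibre_pi_subtype {ι : Type*} (P : ι → Type*) [∀ i, PartialOrder (P i)]
    (hne : ∀ i, Nonempty (P i)) (A : Set ι)
    (hcal : CalibreO1O (∀ i, P i)) : CalibreO1O (∀ a : A, P ↑a) := by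
  classical
  intro S hS
  set b : ∀ i, P i := fun i => (hne i).some with hb
  set ext : (∀ a : A, P ↑a) → ∀ i, P i := fun f i => if h : i ∈ A then f ⟨i, h⟩ else b i with hext
  have hx : ∀ (f : ∀ a : A, P ↑a) (a : A), ext f ↑a = f a := by
    intro f a
    simp only [hext]
    rw [dif_pos a.2]
  have hinj : Function.Injective ext := by
    intro f g hfg
    funext a
    rw [← hx f a, ← hx g a, hfg]
  have hS' : ¬ (ext '' S).Countable := by
    intro h
    exact hS (Set.Countable.mono (Set.subset_preimage_image ext S) (h.preimage hinj))
  obtain ⟨T', hT'sub, hT'inf, u, hu⟩ := hcal (ext '' S) hS'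
  refine ⟨S ∩ ext ⁻¹' T', Set.inter_subset_left, ?_, ⟨fun a => u ↑a, ?_⟩⟩
  · have himg : ext '' (S ∩ ext ⁻¹' T') = T' := by
      apply Set.Subset.antisymm
      · rintro _ ⟨f, ⟨_, hf2⟩, rfl⟩
        exact hf2
      · intro y hy
        obtain ⟨f, hf, rfl⟩ := hT'sub hy
        exact ⟨f, ⟨hf, hy⟩, rfl⟩
    have hT2 := hT'inf
    rw [← himg] at hT2
    exact Set.Infinite.of_image ext hT2
  · rintro f ⟨hf1, hf2⟩
    refine Pi.le_def.mpr fun a => ?_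
    rw [← hx f a]
    exact Pi.le_def.mp (hu hf2) ↑a

universe u v

/-- If the full product of directed sets has calibre `(ω₁,ω)`, then all but countably
many factors are countably directed. -/
lemma badset_countable {ι : Type u} (P : ι → Type v) [∀ i, PartialOrder (P i)]
    (hne : ∀ i, Nonempty (P i))
    (hdir : ∀ i, ∀ F : Set (P i), F.Finite → BddAbove F)
    (hcal : CalibreO1O (∀ i, P i)) :
    {i : ι | ¬ CountablyDirected (P i)}.Countable := by
  classical
  by_contra hC
  set C := {i : ι | ¬ CountablyDirected (P i)} with hCdef
  -- ℵ₁ ≤ #C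
  have hC1 : (ℵ₁ : Cardinal.{u}) ≤ #C := by
    rw [← succ_aleph0]
    apply Order.succ_le_of_lt
    rw [← not_le, le_aleph0_iff_set_countable]
    exact hC
  haveI : IsWellOrder ((ℵ₁ : Cardinal.{u}).ord).ToType (· < ·) := isWellOrder_lt
  have hWcard : #((ℵ₁ : Cardinal.{u}).ord).ToType = (ℵ₁ : Cardinal.{u}) := by
    rw [Cardinal.mk_toType, card_ord]
  obtain ⟨j⟩ : Nonempty (((ℵ₁ : Cardinal.{u}).ord).ToType ↪ C) := by
    rw [← Cardinal.le_def, hWcard]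
    exact hC1
  set jv : ((ℵ₁ : Cardinal.{u}).ord).ToType → ι := fun w => (j w : ι) with hjv
  have hjvinj : Function.Injective jv := Subtype.val_injective.comp j.injective
  have hjvbad : ∀ w, ¬ CountablyDirected (P (jv w)) := fun w => (j w).2
  -- ladders
  have hlad : ∀ i : ι, ∃ t : ℕ → P i,
      ¬ CountablyDirected (P i) → StrictMono t ∧ ∀ u : P i, {n | t n ≤ u}.Finite := by
    intro i
    by_cases h : CountablyDirected (P i)
    · exact ⟨fun _ => (hne i).some, fun h' => absurd h h'⟩
    · obtain ⟨t, ht⟩ := exists_ladder (hdir i) h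
      exact ⟨t, fun _ => ⟨ht.1, ht.2⟩⟩
  choose t ht using hlad
  -- initial segments of W are countable
  have hio : ∀ δ : ((ℵ₁ : Cardinal.{u}).ord).ToType, ({w : ((ℵ₁ : Cardinal.{u}).ord).ToType | w < δ}).Countable := by
    intro δ
    set β := Ordinal.typein (α := ((ℵ₁ : Cardinal.{u}).ord).ToType) (· < ·) δ with hβ
    have hβO : β < (ℵ₁ : Cardinal.{u}).ord := Ordinal.typein_lt_self δ
    have hcard : β.card ≤ ℵ₀ := by
      have := Cardinal.lt_ord.mp hβO
      rwa [← succ_aleph0, Order.lt_succ_iff] at this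
    have hcnt : Countable (Set.Iio β) := by
      rw [← Cardinal.mk_le_aleph0_iff, Ordinal.mk_Iio_ordinal]
      exact (Cardinal.lift_le.mpr hcard).trans_eq Cardinal.lift_aleph0
    have hf : Function.Injective
        (fun w : {w : ((ℵ₁ : Cardinal.{u}).ord).ToType | w < δ} => (⟨Ordinal.typein (α := ((ℵ₁ : Cardinal.{u}).ord).ToType) (· < ·) w.1,
          (Ordinal.typein_lt_typein (α := ((ℵ₁ : Cardinal.{u}).ord).ToType) (· < ·)).mpr w.2⟩ : Set.Iio β)) := by
      intro a b hab
      have h2 := congrArg Subtype.val hab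
      exact Subtype.ext (Ordinal.typein_injective (α := ((ℵ₁ : Cardinal.{u}).ord).ToType) (· < ·) h2)
    have hcw : Countable {w : ((ℵ₁ : Cardinal.{u}).ord).ToType | w < δ} := hf.countable
    exact Set.countable_coe_iff.mp hcw
  -- countable subsets of W are bounded
  have hsup : ∀ g : ℕ → ((ℵ₁ : Cardinal.{u}).ord).ToType, ∃ δ : ((ℵ₁ : Cardinal.{u}).ord).ToType, ∀ n, g n < δ := by
    intro g
    set β := ⨆ n, Order.succ (Ordinal.typein (α := ((ℵ₁ : Cardinal.{u}).ord).ToType) (· < ·) (g n)) with hβ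
    have hβO : β < (ℵ₁ : Cardinal.{u}).ord := by
      rw [hβ]
      refine Cardinal.iSup_lt_ord_lift_of_isRegular
        (f := fun n : ℕ => Order.succ (Ordinal.typein (α := ((ℵ₁ : Cardinal.{u}).ord).ToType) (· < ·) (g n)))
        isRegular_aleph_one ?_ ?_
      · rw [Cardinal.mk_nat, Cardinal.lift_aleph0]
        exact aleph0_lt_aleph_one
      · intro n
        exact (Cardinal.isSuccLimit_ord (aleph0_le_aleph 1)).succ_lt (Ordinal.typein_lt_self (g n))
    have hβtype : β < Ordinal.type (α := ((ℵ₁ : Cardinal.{u}).ord).ToType) (· < ·) := by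
      rwa [Ordinal.type_toType]
    refine ⟨Ordinal.enum (α := ((ℵ₁ : Cardinal.{u}).ord).ToType) (· < ·) ⟨β, hβtype⟩, fun n => ?_⟩
    have h1 : Ordinal.typein (α := ((ℵ₁ : Cardinal.{u}).ord).ToType) (· < ·) (g n) < β := by
      rw [hβ]
      exact lt_of_lt_of_le (Order.lt_succ _)
        (Ordinal.le_iSup (fun n => Order.succ (Ordinal.typein (α := ((ℵ₁ : Cardinal.{u}).ord).ToType) (· < ·) (g n))) n)
    apply (Ordinal.typein_lt_typein (α := ((ℵ₁ : Cardinal.{u}).ord).ToType) (· < ·)).mp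
    rw [Ordinal.typein_enum]
    exact h1
  choose eF heF using fun δ : ((ℵ₁ : Cardinal.{u}).ord).ToType => Set.countable_iff_exists_injective.mp (hio δ)
  set E : ((ℵ₁ : Cardinal.{u}).ord).ToType → ((ℵ₁ : Cardinal.{u}).ord).ToType → ℕ := fun δ ξ => if h : ξ < δ then eF δ ⟨ξ, h⟩ else 0 with hE
  set x : ((ℵ₁ : Cardinal.{u}).ord).ToType → ∀ i, P i :=
    fun ξ i => if h : ∃ w, jv w = i then t i (E h.choose ξ) else (hne i).some with hx
  have hchoose : ∀ (δ : ((ℵ₁ : Cardinal.{u}).ord).ToType) (h : ∃ w, jv w = jv δ), h.choose = δ :=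
    fun δ h => hjvinj h.choose_spec
  have hkey : ∀ δ ξ : ((ℵ₁ : Cardinal.{u}).ord).ToType, x ξ (jv δ) = t (jv δ) (E δ ξ) := by
    intro δ ξ
    have h : ∃ w, jv w = jv δ := ⟨δ, rfl⟩
    simp only [hx]
    rw [dif_pos h, hchoose δ h]
  have hEinj : ∀ (δ : ((ℵ₁ : Cardinal.{u}).ord).ToType) {ξ ξ' : ((ℵ₁ : Cardinal.{u}).ord).ToType}, ξ < δ → ξ' < δ → E δ ξ = E δ ξ' → ξ = ξ' := by
    intro δ ξ ξ' h1 h2 hEq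
    simp only [hE] at hEq
    rw [dif_pos h1, dif_pos h2] at hEq
    exact congrArg Subtype.val (heF δ hEq)
  have hxinj : Function.Injective x := by
    intro ξ ξ' hxx
    by_contra hne'
    obtain ⟨δ, hδ⟩ := hsup (fun n => if n = 0 then ξ else ξ')
    have h1 : ξ < δ := by simpa using hδ 0
    have h2 : ξ' < δ := by simpa using hδ 1
    have hcf := congrFun hxx (jv δ)
    rw [hkey δ ξ, hkey δ ξ'] at hcf
    exact hne' (hEinj δ h1 h2 ((ht (jv δ) (hjvbad δ)).1.injective hcf))
  have hSnc : ¬ (Set.range x).Countable := by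
    intro h
    haveI := h.to_subtype
    have hcw : Countable ((ℵ₁ : Cardinal.{u}).ord).ToType :=
      (show Function.Injective
          (fun w => (⟨x w, Set.mem_range_self w⟩ : ↥(Set.range x))) from
        fun a b hab => hxinj (congrArg Subtype.val hab)).countable
    have hle : #((ℵ₁ : Cardinal.{u}).ord).ToType ≤ ℵ₀ := Cardinal.mk_le_aleph0
    rw [hWcard] at hle
    exact absurd hle (not_le.mpr aleph0_lt_aleph_one)
  obtain ⟨T, hTsub, hTinf, u, hu⟩ := hcal (Set.range x) hSnc
  have hA : (x ⁻¹' T).Infinite := hTinf.preimage hTsub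
  set g := hA.natEmbedding with hg
  obtain ⟨δ, hδ⟩ := hsup (fun n => ((g n : ↥(x ⁻¹' T)) : ((ℵ₁ : Cardinal.{u}).ord).ToType))
  have hgW : Function.Injective (fun n => ((g n : ↥(x ⁻¹' T)) : ((ℵ₁ : Cardinal.{u}).ord).ToType)) :=
    Subtype.val_injective.comp g.injective
  have hmem : ∀ n : ℕ,
      eF δ ⟨((g n : ↥(x ⁻¹' T)) : ((ℵ₁ : Cardinal.{u}).ord).ToType), hδ n⟩ ∈ {m | t (jv δ) m ≤ u (jv δ)} := by
    intro n
    have hx1 : x ((g n : ↥(x ⁻¹' T)) : ((ℵ₁ : Cardinal.{u}).ord).ToType) ∈ T := (g n).2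
    have h3 : x ((g n : ↥(x ⁻¹' T)) : ((ℵ₁ : Cardinal.{u}).ord).ToType) (jv δ) ≤ u (jv δ) := Pi.le_def.mp (hu hx1) (jv δ)
    rw [hkey δ] at h3
    simp only [hE] at h3
    rw [dif_pos (hδ n)] at h3
    exact h3
  have hMinf : {m | t (jv δ) m ≤ u (jv δ)}.Infinite := by
    apply Set.infinite_of_injective_forall_mem
      (f := fun n : ℕ => eF δ ⟨((g n : ↥(x ⁻¹' T)) : ((ℵ₁ : Cardinal.{u}).ord).ToType), hδ n⟩) ?_ hmem
    intro a b hab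
    exact hgW (Subtype.mk_eq_mk.mp (heF δ hab))
  exact hMinf ((ht (jv δ) (hjvbad δ)).2 (u (jv δ)))

/-- For an uncountable cardinal `κ` and a family of directed sets
`{P_α : α < κ}`, the full product has calibre `(ω₁,ω)` iff every countable
subproduct has calibre `(ω₁,ω)` and all but countably many factors are
countably directed. -/
theorem uncountable_product_calibre
    {ι : Type*} (κ : Cardinal) (hκ : ℵ₀ < κ) (hι : #ι = κ)
    (P : ι → Type*) [∀ i, PartialOrder (P i)]
    (hdir : ∀ i, ∀ F : Set (P i), F.Finite → BddAbove F) :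
    CalibreO1O (∀ i, P i) ↔
      ((∀ A : Set ι, A.Countable → CalibreO1O (∀ a : A, P ↑a)) ∧
        {i : ι | ¬ CountablyDirected (P i)}.Countable) := by
  classical
  have hne : ∀ i, Nonempty (P i) := by
    intro i
    obtain ⟨x, -⟩ := hdir i ∅ Set.finite_empty
    exact ⟨x⟩
  constructor
  · intro hcal
    exact ⟨fun A _ => calibre_pi_subtype P hne A hcal, badset_countable P hne hdir hcal⟩
  · rintro ⟨h1, h2⟩ S hS
    set C := {i : ι | ¬ CountablyDirected (P i)} with hCdef
    set π : (∀ i, P i) → (∀ a : C, P ↑a) := fun f a => f ↑a with hπ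
    by_cases hπS : (π '' S).Countable
    · -- some fiber is uncountable
      have hfib : ∃ z ∈ π '' S, ¬ {f ∈ S | π f = z}.Countable := by
        by_contra hall
        push_neg at hall
        apply hS
        have hsub : S ⊆ ⋃ z ∈ π '' S, {f ∈ S | π f = z} :=
          fun f hf => Set.mem_biUnion (Set.mem_image_of_mem π hf) ⟨hf, rfl⟩
        exact (hπS.biUnion hall).mono hsub
      obtain ⟨z, hz, hfibc⟩ := hfib
      have hfibinf : {f ∈ S | π f = z}.Infinite := fun hfin => hfibc hfin.countable
      set g := hfibinf.natEmbedding with hg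
      have ginj : Function.Injective
          (fun n => ((g n : ↥{f ∈ S | π f = z}) : ∀ i, P i)) :=
        Subtype.val_injective.comp g.injective
      refine ⟨Set.range (fun n => ((g n : ↥{f ∈ S | π f = z}) : ∀ i, P i)), ?_, ?_, ?_⟩
      · rintro _ ⟨n, rfl⟩
        exact (g n).2.1
      · exact Set.infinite_range_of_injective ginj
      · have hubd : ∀ i : ι, ∃ v : P i, ∀ n : ℕ,
            ((g n : ↥{f ∈ S | π f = z}) : ∀ j, P j) i ≤ v := by
          intro i
          by_cases h : i ∈ C
          · refine ⟨z ⟨i, h⟩, fun n => ?_⟩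
            exact le_of_eq (congrFun (g n).2.2 ⟨i, h⟩)
          · have hcd : CountablyDirected (P i) := not_not.mp h
            obtain ⟨v, hv⟩ := hcd
              (Set.range fun n => ((g n : ↥{f ∈ S | π f = z}) : ∀ j, P j) i)
              (Set.countable_range _)
            exact ⟨v, fun n => hv (Set.mem_range_self n)⟩
        choose v hv using hubd
        refine ⟨v, ?_⟩
        rintro _ ⟨n, rfl⟩
        exact Pi.le_def.mpr fun i => hv i n
    · obtain ⟨T', hT'sub, hT'inf, w, hw⟩ := h1 C h2 (π '' S) hπS
      set g := hT'inf.natEmbedding with hg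
      have hpre : ∀ n : ℕ, ∃ f, f ∈ S ∧ π f = ((g n : ↥T') : ∀ a : C, P ↑a) := by
        intro n
        obtain ⟨f, hf, hfe⟩ := hT'sub (g n).2
        exact ⟨f, hf, hfe⟩
      choose s hs1 hs2 using hpre
      have hsinj : Function.Injective s := by
        intro n m hnm
        apply g.injective
        apply Subtype.val_injective
        rw [← hs2 n, ← hs2 m, hnm]
      refine ⟨Set.range s, by rintro _ ⟨n, rfl⟩; exact hs1 n,
        Set.infinite_range_of_injective hsinj, ?_⟩
      have hubd : ∀ i : ι, ∃ v : P i, ∀ n, s n i ≤ v := by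
        intro i
        by_cases h : i ∈ C
        · refine ⟨w ⟨i, h⟩, fun n => ?_⟩
          have h6 : π (s n) ≤ w := hs2 n ▸ hw (g n).2
          exact Pi.le_def.mp h6 ⟨i, h⟩
        · have hcd : CountablyDirected (P i) := not_not.mp h
          obtain ⟨v, hv⟩ := hcd (Set.range fun n => s n i) (Set.countable_range _)
          exact ⟨v, fun n => hv ⟨n, rfl⟩⟩
      choose v hv using hubd
      refine ⟨v, ?_⟩
      rintro _ ⟨n, rfl⟩
      exact Pi.le_def.mpr fun i => hv i n
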